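/- Let λ > 0 and for integer k ≥ 0 define f_k(λ) = e^λ − Σ_{i=0}^{k−1} λ^i/i!. Then λ f_1(λ)/f_2(λ) > 2 for all λ > 0, the function λ ↦ λ f_1(λ)/f_2(λ) is continuous and strictly increasing on (0,∞), tends to 2 as λ → 0+ and to ∞ as λ → ∞; consequently for every real t > 2 the equation λ f_1(λ)/f_2(λ) = t has a unique positive solution λ. -/

import Mathlib

open Filter Set

noncomputable def fTrunc (k : ℕ) (lam : ℝ) : ℝ :=
  Real.exp lam - ∑ i ∈ Finset.range k, lam ^ i / Nat.factorial i

lemma fT1 (x : ℝ) : fTrunc 1 x = Real.exp x - 1 := by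
  simp [fTrunc]

lemma fT2 (x : ℝ) : fTrunc 2 x = Real.exp x - 1 - x := by
  simp [fTrunc, Finset.sum_range_succ]
  ring

lemma f2_pos {x : ℝ} (hx : 0 < x) : 0 < Real.exp x - 1 - x := by
  nlinarith [Real.add_one_lt_exp (ne_of_gt hx)]

lemma key_ineq {x : ℝ} (hx : 0 < x) : x ^ 2 * Real.exp x < (Real.exp x - 1) ^ 2 := by
  have h1 : x / 2 < Real.sinh (x / 2) := Real.self_lt_sinh_iff.2 (by positivity)
  have hs : Real.sinh (x / 2) = (Real.exp (x / 2) - Real.exp (-(x / 2))) / 2 := Real.sinh_eq _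
  have hmul : Real.exp (x / 2) * Real.exp (x / 2) = Real.exp x := by
    rw [← Real.exp_add]; ring_nf
  have hinv : Real.exp (-(x / 2)) * Real.exp (x / 2) = 1 := by
    rw [← Real.exp_add]; simp
  have hp : 0 < Real.exp (x / 2) := Real.exp_pos _
  -- exp x - 1 > x * exp (x/2)
  have h2 : x * Real.exp (x / 2) < Real.exp x - 1 := by nlinarith
  nlinarith [mul_pos hx hp]

lemma hasDerivG {x : ℝ} (hx : 0 < x) :
    HasDerivAt (fun y : ℝ => y * (Real.exp y - 1) / (Real.exp y - 1 - y))
      (((Real.exp x - 1) ^ 2 - x ^ 2 * Real.exp x) / (Real.exp x - 1 - x) ^ 2) x := by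
  have hN : HasDerivAt (fun y : ℝ => y * (Real.exp y - 1))
      (1 * (Real.exp x - 1) + x * Real.exp x) x :=
    (hasDerivAt_id x).mul ((Real.hasDerivAt_exp x).sub_const 1)
  have hD : HasDerivAt (fun y : ℝ => Real.exp y - 1 - y) (Real.exp x - 1) x := by
    exact ((Real.hasDerivAt_exp x).sub_const 1).sub (hasDerivAt_id' x)
  have := hN.div hD (ne_of_gt (f2_pos hx))
  rw [show ((Real.exp x - 1) ^ 2 - x ^ 2 * Real.exp x) / (Real.exp x - 1 - x) ^ 2 = ((1 * (Real.exp x - 1) + x * Real.exp x) * (Real.exp x - 1 - x) - x * (Real.exp x - 1) * (Real.exp x - 1)) / (Real.exp x - 1 - x) ^ 2 by ring]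
  exact this

lemma gMono : StrictMonoOn (fun y : ℝ => y * (Real.exp y - 1) / (Real.exp y - 1 - y)) (Set.Ioi 0) := by
  apply strictMonoOn_of_deriv_pos (convex_Ioi 0)
  · intro x hx
    exact ((continuousAt_id.mul ((Real.continuous_exp.continuousAt).sub continuousAt_const)).div
      (((Real.continuous_exp.continuousAt).sub continuousAt_const).sub continuousAt_id)
      (ne_of_gt (f2_pos hx))).continuousWithinAt
  · intro x hx
    rw [interior_Ioi] at hx
    rw [(hasDerivG hx).deriv]
    exact div_pos (sub_pos.2 (key_ineq hx)) (pow_pos (f2_pos hx) 2)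

lemma gCont : ContinuousOn (fun y : ℝ => y * (Real.exp y - 1) / (Real.exp y - 1 - y)) (Set.Ioi 0) := by
  intro x hx
  exact ((continuousAt_id.mul ((Real.continuous_exp.continuousAt).sub continuousAt_const)).div
    (((Real.continuous_exp.continuousAt).sub continuousAt_const).sub continuousAt_id)
    (ne_of_gt (f2_pos hx))).continuousWithinAt

lemma tend1 : Tendsto (fun x : ℝ => (Real.exp x - 1) / x) (nhdsWithin 0 (Set.Ioi 0)) (nhds 1) := by
  have h0 : Tendsto (fun x : ℝ => (Real.exp x - 1) / x - 1) (nhdsWithin 0 (Set.Ioi 0)) (nhds 0) := by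
    apply squeeze_zero_norm' (a := fun x : ℝ => (3 / 4) * x)
    · filter_upwards [Ioo_mem_nhdsGT (zero_lt_one)] with x hx
      have hb := Real.exp_bound (x := x) (by rw [abs_of_pos hx.1]; exact le_of_lt hx.2) (n := 2) (by norm_num)
      rw [abs_of_pos hx.1] at hb
      simp [Finset.sum_range_succ] at hb
      have hx0 : x ≠ 0 := ne_of_gt hx.1
      have : (Real.exp x - 1) / x - 1 = (Real.exp x - (1 + x)) / x := by field_simp; ring
      rw [Real.norm_eq_abs, this, abs_div, abs_of_pos hx.1, div_le_iff₀ hx.1]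
      calc |Real.exp x - (1 + x)| ≤ x ^ 2 * (3 / (2 * 2)) := by
            convert hb using 2 <;> norm_num
        _ = 3 / 4 * x * x := by ring
    · have : Tendsto (fun x : ℝ => (3 / 4) * x) (nhds (0:ℝ)) (nhds ((3/4) * 0)) :=
        (continuous_const.mul continuous_id).tendsto 0
      simpa using this.mono_left nhdsWithin_le_nhds
  have := h0.add_const 1
  simpa using this

lemma tend2 : Tendsto (fun x : ℝ => (Real.exp x - 1 - x) / x ^ 2) (nhdsWithin 0 (Set.Ioi 0)) (nhds (1/2)) := by
  have h0 : Tendsto (fun x : ℝ => (Real.exp x - 1 - x) / x ^ 2 - 1 / 2) (nhdsWithin 0 (Set.Ioi 0)) (nhds 0) := by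
    apply squeeze_zero_norm' (a := fun x : ℝ => (2 / 9) * x)
    · filter_upwards [Ioo_mem_nhdsGT (zero_lt_one)] with x hx
      have hb := Real.exp_bound (x := x) (by rw [abs_of_pos hx.1]; exact le_of_lt hx.2) (n := 3) (by norm_num)
      rw [abs_of_pos hx.1] at hb
      simp [Finset.sum_range_succ] at hb
      have hx0 : x ≠ 0 := ne_of_gt hx.1
      have hsq : (0:ℝ) < x ^ 2 := by positivity
      have : (Real.exp x - 1 - x) / x ^ 2 - 1 / 2 = (Real.exp x - (1 + x + x ^ 2 / 2)) / x ^ 2 := by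
        field_simp; ring
      rw [Real.norm_eq_abs, this, abs_div, abs_of_pos hsq, div_le_iff₀ hsq]
      calc |Real.exp x - (1 + x + x ^ 2 / 2)| ≤ x ^ 3 * (4 / (6 * 3)) := by
            convert hb using 2 <;> norm_num
        _ = 2 / 9 * x * x ^ 2 := by ring
    · have : Tendsto (fun x : ℝ => (2 / 9) * x) (nhds (0:ℝ)) (nhds ((2/9) * 0)) :=
        (continuous_const.mul continuous_id).tendsto 0
      simpa using this.mono_left nhdsWithin_le_nhds
  have := h0.add_const (1/2)
  simpa using this

lemma gLim0 : Tendsto (fun y : ℝ => y * (Real.exp y - 1) / (Real.exp y - 1 - y))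
    (nhdsWithin 0 (Set.Ioi 0)) (nhds 2) := by
  have h := tend1.div tend2 (by norm_num)
  have heq : ∀ᶠ x in nhdsWithin (0:ℝ) (Set.Ioi 0),
      ((Real.exp x - 1) / x) / ((Real.exp x - 1 - x) / x ^ 2)
        = x * (Real.exp x - 1) / (Real.exp x - 1 - x) := by
    filter_upwards [self_mem_nhdsWithin] with x hx
    have hx0 : (x:ℝ) ≠ 0 := ne_of_gt hx
    have hf2 : Real.exp x - 1 - x ≠ 0 := ne_of_gt (f2_pos hx)
    field_simp
  have := h.congr' heq
  norm_num at this
  exact this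

lemma gTop : Tendsto (fun y : ℝ => y * (Real.exp y - 1) / (Real.exp y - 1 - y)) atTop atTop := by
  refine tendsto_atTop_mono' atTop ?_ tendsto_id
  filter_upwards [eventually_gt_atTop (0:ℝ)] with x hx
  have hf2 := f2_pos hx
  rw [id, le_div_iff₀ hf2]
  nlinarith

lemma gGtTwo : ∀ x : ℝ, 0 < x → 2 < x * (Real.exp x - 1) / (Real.exp x - 1 - x) := by
  intro x hx
  have hhalf : (0:ℝ) < x / 2 := by linarith
  have h1 : x / 2 * (Real.exp (x/2) - 1) / (Real.exp (x/2) - 1 - x/2)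
      < x * (Real.exp x - 1) / (Real.exp x - 1 - x) :=
    gMono hhalf hx (by linarith)
  have h2 : 2 ≤ x / 2 * (Real.exp (x/2) - 1) / (Real.exp (x/2) - 1 - x/2) := by
    refine le_of_tendsto gLim0 ?_
    filter_upwards [Ioo_mem_nhdsGT hhalf] with y hy
    exact le_of_lt (gMono hy.1 hhalf hy.2)
  linarith


/-- The mean `λ f_1(λ)/f_2(λ)` of the Poisson distribution truncated to `≥ 2`
exceeds 2, is continuous and strictly increasing on `(0,∞)`, tends to `2` as
`λ → 0⁺` and to `∞` as `λ → ∞`; hence for every `t > 2` the equation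
`λ f_1(λ)/f_2(λ) = t` has a unique positive solution. -/
theorem truncated_poisson_mean_properties :
    (∀ lam : ℝ, 0 < lam → 2 < lam * fTrunc 1 lam / fTrunc 2 lam) ∧
    ContinuousOn (fun lam : ℝ => lam * fTrunc 1 lam / fTrunc 2 lam) (Set.Ioi 0) ∧
    StrictMonoOn (fun lam : ℝ => lam * fTrunc 1 lam / fTrunc 2 lam) (Set.Ioi 0) ∧
    Tendsto (fun lam : ℝ => lam * fTrunc 1 lam / fTrunc 2 lam)
      (nhdsWithin 0 (Set.Ioi 0)) (nhds 2) ∧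
    Tendsto (fun lam : ℝ => lam * fTrunc 1 lam / fTrunc 2 lam) atTop atTop ∧
    (∀ t : ℝ, 2 < t → ∃! lam : ℝ, 0 < lam ∧ lam * fTrunc 1 lam / fTrunc 2 lam = t) := by
  simp only [fT1, fT2]
  refine ⟨gGtTwo, gCont, gMono, gLim0, gTop, ?_⟩
  intro t ht
  set g := fun y : ℝ => y * (Real.exp y - 1) / (Real.exp y - 1 - y) with hg
  obtain ⟨a, ha, hat⟩ : ∃ a : ℝ, 0 < a ∧ g a < t := by
    have := (gLim0.eventually_lt_const ht).and self_mem_nhdsWithin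
    obtain ⟨a, h1, h2⟩ := this.exists
    exact ⟨a, h2, h1⟩
  obtain ⟨b, hab, htb⟩ : ∃ b : ℝ, a < b ∧ t < g b := by
    have := (gTop.eventually_gt_atTop t).and (eventually_gt_atTop a)
    obtain ⟨b, h1, h2⟩ := this.exists
    exact ⟨b, h2, h1⟩
  have hsub : Set.Icc a b ⊆ Set.Ioi 0 := fun y hy => lt_of_lt_of_le ha hy.1
  have hIVT := intermediate_value_Icc (le_of_lt hab) (gCont.mono hsub)
  obtain ⟨lam, hlam, hlamt⟩ := hIVT ⟨le_of_lt hat, le_of_lt htb⟩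
  have hlampos : 0 < lam := lt_of_lt_of_le ha hlam.1
  refine ⟨lam, ⟨hlampos, hlamt⟩, ?_⟩
  rintro y ⟨hy, hyt⟩
  exact gMono.injOn hy hlampos (hyt.trans hlamt.symm)
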